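/- For every real C with 0 < C < R, where R is the unique real root of x³ = 4(x²+x+1), there exists n such that the sequence S defined by S₀ = 0, S₁ = 1, S_{k+1} = ((C²+2C+2)S_k − (C²+C+1)S_{k−1})/(2C+1) satisfies S_n − S_{n−1} < S_{n−1} − S_{n−2}, i.e., the associated weight sequence w_k = S_k − S_{k−1} eventually strictly decreases. -/

import Mathlib

/-- For `0 < C < R` with `R` the unique real root of `x³ = 4(x²+x+1)`, the
increments of the recurrence solution `S` eventually strictly decrease. -/
theorem stmt_19 (R : ℝ) (hR : R ^ 3 = 4 * (R ^ 2 + R + 1))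
    (hRuniq : ∀ x : ℝ, x ^ 3 = 4 * (x ^ 2 + x + 1) → x = R)
    (C : ℝ) (hC0 : 0 < C) (hCR : C < R)
    (S : ℕ → ℝ) (hS0 : S 0 = 0) (hS1 : S 1 = 1)
    (hrec : ∀ k ≥ 1, S (k + 1)
      = ((C ^ 2 + 2 * C + 2) * S k - (C ^ 2 + C + 1) * S (k - 1)) / (2 * C + 1)) :
    ∃ n : ℕ, 2 ≤ n ∧ S n - S (n - 1) < S (n - 1) - S (n - 2) := by
  by_contra hcon
  push_neg at hcon
  -- C^3 < 4*(C^2+C+1) via IVT and uniqueness of R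
  have hC3 : C ^ 3 < 4 * (C ^ 2 + C + 1) := by
    by_contra hge
    push_neg at hge
    have hcont : ContinuousOn (fun x : ℝ => x ^ 3 - 4 * (x ^ 2 + x + 1))
        (Set.Icc 0 C) := (by fun_prop : Continuous fun x : ℝ => x ^ 3 - 4 * (x ^ 2 + x + 1)).continuousOn
    have hmem : (0 : ℝ) ∈ Set.Icc ((fun x : ℝ => x ^ 3 - 4 * (x ^ 2 + x + 1)) 0)
        ((fun x : ℝ => x ^ 3 - 4 * (x ^ 2 + x + 1)) C) := by
      constructor <;> simp <;> nlinarith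
    obtain ⟨r, hrmem, hfr⟩ := intermediate_value_Icc hC0.le hcont hmem
    have hrR : r = R := hRuniq r (by simp at hfr; linarith)
    have : r ≤ C := hrmem.2
    linarith
  have ha : (0 : ℝ) < 2 * C + 1 := by linarith
  have hcpos : (0 : ℝ) < C ^ 2 + C + 1 := by nlinarith
  set w : ℕ → ℝ := fun k => S (k + 1) - S k with hw
  have hw0 : w 0 = 1 := by simp [hw, hS0, hS1]
  have hmono : ∀ k, w k ≤ w (k + 1) := by
    intro k
    have := hcon (k + 2) (by omega)
    simpa [hw] using this
  have hw1 : ∀ k, 1 ≤ w k := by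
    intro k
    induction k with
    | zero => simp [hw0]
    | succ n ih => linarith [hmono n]
  have hS1' : ∀ k, 1 ≤ S (k + 1) := by
    intro k
    induction k with
    | zero => simp [hS1]
    | succ n ih =>
      have := hw1 (n + 1)
      simp only [hw] at this
      linarith
  -- recurrence for w
  have hrec' : ∀ k, (2 * C + 1) * w (k + 1)
      = (C ^ 2 + C + 1) * w k - C * S (k + 1) := by
    intro k
    have h := hrec (k + 1) (by omega)
    simp only [Nat.add_sub_cancel] at h
    have : S (k + 1 + 1) * (2 * C + 1)
        = (C ^ 2 + 2 * C + 2) * S (k + 1) - (C ^ 2 + C + 1) * S k := by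
      rw [h]; field_simp
    simp only [hw]
    ring_nf
    ring_nf at this
    linarith
  set ε : ℝ := ((C ^ 2 + C + 1) - C ^ 3 / 4) / (C ^ 2 + C + 1) with hε
  have hεpos : 0 < ε := by
    apply div_pos _ hcpos
    linarith
  set x : ℕ → ℝ := fun k => S (k + 1) / w k with hx
  -- key step: x grows by ε
  have key : ∀ k, x k + ε ≤ x (k + 1) := by
    intro k
    have hu : 1 ≤ w k := hw1 k
    have hv : 1 ≤ w (k + 1) := hw1 (k + 1)
    have hs : 1 ≤ S (k + 1) := hS1' k
    have hupos : 0 < w k := by linarith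
    have hvpos : 0 < w (k + 1) := by linarith
    have hrk := hrec' k
    have hSk2 : S (k + 1 + 1) = S (k + 1) + w (k + 1) := by simp [hw]
    simp only [hx, hSk2]
    rw [div_add' _ _ _ hupos.ne', div_le_div_iff₀ hupos hvpos]
    -- (S(k+1) + ε * w k) * w (k+1) ≤ (S(k+1) + w(k+1)) * w k
    have hεc : ε * (C ^ 2 + C + 1) = (C ^ 2 + C + 1) - C ^ 3 / 4 := by
      rw [hε]; field_simp
    have hspos : (0 : ℝ) < S (k + 1) := lt_of_lt_of_le one_pos hs
    have main : (S (k + 1) + ε * w k) * ((C ^ 2 + C + 1) * w k - C * S (k + 1))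
        ≤ S (k + 1) * ((2 * C + 1) * w k)
          + w k * ((C ^ 2 + C + 1) * w k - C * S (k + 1)) := by
      nlinarith [hεc, mul_nonneg hC0.le (sq_nonneg (2 * S (k + 1) - C * w k)),
        mul_pos (mul_pos hεpos hC0) (mul_pos hupos hspos), sq_nonneg (w k),
        mul_pos hupos hupos]
    rw [← hrk] at main
    nlinarith [main, ha, mul_pos hupos hvpos]
  have grow : ∀ k : ℕ, 1 + k * ε ≤ x k := by
    intro k
    induction k with
    | zero => simp [hx, hw0, hS1]
    | succ n ih =>
      have := key n
      push_cast
      push_cast at ih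
      linarith
  have bound : ∀ k, x k ≤ C - 1 := by
    intro k
    have h1 : (2 * C + 1) * w k ≤ (2 * C + 1) * w (k + 1) :=
      mul_le_mul_of_nonneg_left (hmono k) ha.le
    rw [hrec' k] at h1
    have h2 : C * S (k + 1) ≤ (C ^ 2 - C) * w k := by nlinarith
    have h3 : S (k + 1) ≤ (C - 1) * w k := by
      have := (mul_le_mul_iff_right₀ hC0).mp (by linarith : C * S (k + 1) ≤ C * ((C - 1) * w k))
      linarith
    have hupos : 0 < w k := lt_of_lt_of_le one_pos (hw1 k)
    rw [hx]
    rw [div_le_iff₀ hupos]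
    nlinarith [hw1 k, hS1' k]
  obtain ⟨k, hk⟩ := exists_nat_gt ((C - 2) / ε)
  have : C - 2 < k * ε := by
    rw [div_lt_iff₀ hεpos] at hk
    linarith
  have := grow k
  have := bound k
  linarith
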